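/- Let Y be a finite measure space with μ(Y) > 0 and X = L²(Y). The operator T : X → X defined by Tf = g − 3f (where g is the constant function 1) is not an interpolative Kannan type contraction: there is no a ∈ [0,1) and α ∈ (0,1) such that ‖Tf − Th‖ ≤ a·‖f − Tf‖^α·‖h − Th‖^(1−α) for all f, h ∈ X. -/

import Mathlib

open MeasureTheory

theorem L2_example_not_interpolative_kannan
    {Y : Type*} [MeasurableSpace Y] (μ : MeasureTheory.Measure Y) [IsFiniteMeasure μ]
    (hμ : μ Set.univ ≠ 0) :
    ¬ ∃ (a α : ℝ), 0 ≤ a ∧ a < 1 ∧ 0 < α ∧ α < 1 ∧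
      ∀ f h : Lp ℝ 2 μ,
        ‖(((memLp_const (1 : ℝ)).toLp (fun _ => (1 : ℝ)) - (3 : ℝ) • f) -
            ((memLp_const (1 : ℝ)).toLp (fun _ => (1 : ℝ)) - (3 : ℝ) • h))‖ ≤
          a * ‖f - ((memLp_const (1 : ℝ)).toLp (fun _ => (1 : ℝ)) - (3 : ℝ) • f)‖ ^ α
            * ‖h - ((memLp_const (1 : ℝ)).toLp (fun _ => (1 : ℝ)) - (3 : ℝ) • h)‖ ^ (1 - α) := by
  rintro ⟨a, α, ha0, ha1, hα0, hα1, H⟩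
  set g : Lp ℝ 2 μ := (memLp_const (1 : ℝ)).toLp (fun _ => (1 : ℝ)) with hg
  have hgne : g ≠ 0 := by
    intro h0
    have hae : (fun _ : Y => (1 : ℝ)) =ᵐ[μ] 0 := by
      have h1 := (MemLp.coeFn_toLp (p := 2) (μ := μ) (memLp_const (1 : ℝ))).symm
      rw [← hg, h0] at h1
      exact h1.trans (Lp.coeFn_zero ℝ 2 μ)
    have h2 : μ {x : Y | ¬ ((fun _ : Y => (1 : ℝ)) x = (0 : Y → ℝ) x)} = 0 := hae
    simp at h2
    simp [h2] at hμ
  have hgnorm : 0 < ‖g‖ := norm_pos_iff.mpr hgne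
  have key := H 0 ((4 : ℝ)⁻¹ • g)
  have e1 : (g - (3 : ℝ) • (0 : Lp ℝ 2 μ)) - (g - (3 : ℝ) • ((4 : ℝ)⁻¹ • g))
      = (3 / 4 : ℝ) • g := by
    rw [smul_smul, smul_zero, sub_zero]
    rw [sub_sub_cancel]
    norm_num
  have e2 : ((4 : ℝ)⁻¹ • g) - (g - (3 : ℝ) • ((4 : ℝ)⁻¹ • g)) = 0 := by
    rw [smul_smul]
    rw [sub_sub_eq_add_sub, ← add_smul,
      show ((4:ℝ)⁻¹ + 3 * 4⁻¹) = 1 by norm_num, one_smul, sub_self]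
  rw [e1, e2] at key
  rw [norm_smul, norm_zero, Real.zero_rpow (by linarith)] at key
  have : (0 : ℝ) < ‖(3 / 4 : ℝ)‖ * ‖g‖ := by
    apply mul_pos _ hgnorm
    rw [Real.norm_eq_abs]; norm_num
  linarith [key, this]
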